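/- Let V be a finite-dimensional complex inner product space and let A, B : [0, r] → (self-adjoint operators on V) be continuous. Let U, W : [0, r] → (operators on V) solve ∂_s U(s) = i A(s) U(s) and ∂_s W(s) = i B(s) W(s) with U(0) = W(0) = I (so U(s) and W(s) are unitary for all s). Then for all s ∈ [0, r]: ‖U(s) − W(s)‖ ≤ ∫₀^s ‖A(u) − B(u)‖ du. -/

import Mathlib

/-- Comparison of two quasi-adiabatic evolutions: if
`∂_s U(s) = i A(s) U(s)` and `∂_s W(s) = i B(s) W(s)` with `U(0) = W(0) = I`, for
continuous families of self-adjoint operators `A, B` (so `U(s)`, `W(s)` are unitary),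
then `‖U(s) − W(s)‖ ≤ ∫₀^s ‖A(u) − B(u)‖ du`. -/
theorem unitary_evolution_comparison
    {V : Type*} [NormedAddCommGroup V] [InnerProductSpace ℂ V] [FiniteDimensional ℂ V]
    (r : ℝ) (hr : 0 ≤ r)
    (A B U W : ℝ → V →L[ℂ] V)
    (hAc : ContinuousOn A (Set.Icc 0 r)) (hBc : ContinuousOn B (Set.Icc 0 r))
    (hAsa : ∀ s ∈ Set.Icc 0 r, IsSelfAdjoint (A s))
    (hBsa : ∀ s ∈ Set.Icc 0 r, IsSelfAdjoint (B s))
    (hU0 : U 0 = 1) (hW0 : W 0 = 1)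
    (hU : ∀ s ∈ Set.Icc 0 r,
      HasDerivWithinAt U (Complex.I • (A s * U s)) (Set.Icc 0 r) s)
    (hW : ∀ s ∈ Set.Icc 0 r,
      HasDerivWithinAt W (Complex.I • (B s * W s)) (Set.Icc 0 r) s) :
    ∀ s ∈ Set.Icc 0 r, ‖U s - W s‖ ≤ ∫ u in (0:ℝ)..s, ‖A u - B u‖ := by
  haveI : CompleteSpace V := FiniteDimensional.complete ℂ V
  -- unitarity (left): star T * T = 1
  have unit : ∀ (C : ℝ → V →L[ℂ] V), (∀ u ∈ Set.Icc 0 r, IsSelfAdjoint (C u)) →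
      ∀ (T : ℝ → V →L[ℂ] V), T 0 = 1 →
      (∀ u ∈ Set.Icc 0 r, HasDerivWithinAt T (Complex.I • (C u * T u)) (Set.Icc 0 r) u) →
      ∀ u ∈ Set.Icc 0 r, star (T u) * T u = 1 := by
    intro C hCsa T hT0 hT u hu
    have key : ∀ x ∈ Set.Icc (0:ℝ) r,
        HasDerivWithinAt (fun t => star (T t) * T t)
          ((fun _ => (0 : V →L[ℂ] V)) x) (Set.Icc 0 r) x := by
      intro x hx
      have h1 : HasDerivWithinAt (fun t => star (T t) * T t) _ _ _ := (hT x hx).star.mul (hT x hx)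
      convert h1 using 1
      have hC := (hCsa x hx).star_eq
      simp only [star_smul, star_mul, hC, Complex.star_def, Complex.conj_I,
        neg_smul, neg_mul, smul_mul_assoc, mul_smul_comm, mul_assoc]
      abel
    have hbd := Convex.norm_image_sub_le_of_norm_hasDerivWithin_le
      (f := fun t => star (T t) * T t) (f' := fun _ => (0 : V →L[ℂ] V))
      key (fun x _ => le_of_eq (norm_zero)) (convex_Icc 0 r)
      (Set.left_mem_Icc.2 hr) hu
    have : star (T u) * T u = star (T 0) * T 0 := by
      have : ‖star (T u) * T u - star (T 0) * T 0‖ ≤ 0 := by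
        simpa using hbd
      have := le_antisymm this (norm_nonneg _)
      rwa [norm_eq_zero, sub_eq_zero] at this
    rw [this, hT0]; simp
  have hUU : ∀ u ∈ Set.Icc (0:ℝ) r, star (U u) * U u = 1 := unit A hAsa U hU0 hU
  have hWW : ∀ u ∈ Set.Icc (0:ℝ) r, star (W u) * W u = 1 := unit B hBsa W hW0 hW
  -- operator norm bounds
  have hnorm1 : ∀ (T : V →L[ℂ] V), star T * T = 1 → ‖T‖ ≤ 1 := by
    intro T hT
    have h1 : ‖T‖ * ‖T‖ = ‖star T * T‖ := (CStarRing.norm_star_mul_self).symm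
    rw [hT] at h1
    have h2 : ‖(1 : V →L[ℂ] V)‖ ≤ 1 := by
      rw [ContinuousLinearMap.one_def]; exact ContinuousLinearMap.norm_id_le
    nlinarith [norm_nonneg T]
  have hUn : ∀ u ∈ Set.Icc (0:ℝ) r, ‖U u‖ ≤ 1 := fun u hu => hnorm1 _ (hUU u hu)
  have hWn : ∀ u ∈ Set.Icc (0:ℝ) r, ‖W u‖ ≤ 1 := fun u hu => hnorm1 _ (hWW u hu)
  -- continuity
  have hUc : ContinuousOn U (Set.Icc 0 r) := fun x hx => (hU x hx).continuousWithinAt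
  have hWc : ContinuousOn W (Set.Icc 0 r) := fun x hx => (hW x hx).continuousWithinAt
  intro s hs
  obtain ⟨hs0, hsr⟩ := hs
  have hsub : Set.Icc (0:ℝ) s ⊆ Set.Icc 0 r := Set.Icc_subset_Icc le_rfl hsr
  -- right unitarity of U s (finite dimension)
  have hUUs : U s * star (U s) = 1 := by
    have h1 : star (U s) * U s = 1 := hUU s ⟨hs0, hsr⟩
    have h2 : ((star (U s) : V →L[ℂ] V) : V →ₗ[ℂ] V) * ((U s) : V →ₗ[ℂ] V) = 1 := by
      ext x
      have := congrArg (fun (T : V →L[ℂ] V) => T x) h1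
      simpa using this
    have h3 := mul_eq_one_comm.mp h2
    ext x
    have := congrArg (fun (T : V →ₗ[ℂ] V) => T x) h3
    simpa using this
  -- the comparison function X t = star (U t) * W t
  set X : ℝ → V →L[ℂ] V := fun t => star (U t) * W t with hXdef
  set X' : ℝ → V →L[ℂ] V :=
    fun t => Complex.I • (star (U t) * ((B t - A t) * W t)) with hX'def
  have hX : ∀ x ∈ Set.Icc (0:ℝ) r, HasDerivWithinAt X (X' x) (Set.Icc 0 r) x := by
    intro x hx
    have h1 : HasDerivWithinAt (fun t => star (U t) * W t) _ _ _ := (hU x hx).star.mul (hW x hx)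
    convert h1 using 1
    have hA := (hAsa x hx).star_eq
    simp only [hX'def, star_smul, star_mul, hA, Complex.star_def, Complex.conj_I,
      neg_smul, neg_mul, smul_mul_assoc, mul_smul_comm, mul_assoc, sub_mul,
      mul_sub, smul_sub]
    abel
  -- continuity of X and X'
  have hXc : ContinuousOn X (Set.Icc 0 r) := hUc.star.mul hWc
  have hX'c : ContinuousOn X' (Set.Icc 0 r) := by
    rw [hX'def]
    apply ContinuousOn.fun_const_smul
    exact hUc.star.mul ((hBc.sub hAc).mul hWc)
  -- FTC
  have hftc : ∫ u in (0:ℝ)..s, X' u = X s - X 0 := by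
    apply intervalIntegral.integral_eq_sub_of_hasDeriv_right_of_le hs0
      (hXc.mono hsub)
    · intro x hx
      exact (hX x ⟨le_of_lt hx.1, le_trans (le_of_lt hx.2) hsr⟩).mono_of_mem_nhdsWithin
        (Icc_mem_nhdsGT_of_mem ⟨le_of_lt hx.1, lt_of_lt_of_le hx.2 hsr⟩)
    · apply ContinuousOn.intervalIntegrable
      exact hX'c.mono (by rwa [Set.uIcc_of_le hs0])
  -- integrability of the bound
  have hgi : IntervalIntegrable (fun u => ‖A u - B u‖) MeasureTheory.volume 0 s := by
    apply ContinuousOn.intervalIntegrable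
    exact ((hAc.sub hBc).norm).mono (by rwa [Set.uIcc_of_le hs0])
  -- norm bound on the integral
  have hbound : ‖X s - X 0‖ ≤ ∫ u in (0:ℝ)..s, ‖A u - B u‖ := by
    rw [← hftc]
    have hae : ∀ᵐ t ∂(MeasureTheory.volume.restrict <| Set.uIoc (0:ℝ) s),
        ‖X' t‖ ≤ ‖A t - B t‖ := by
      apply MeasureTheory.ae_restrict_of_forall_mem measurableSet_uIoc
      intro t ht
      rw [Set.uIoc_of_le hs0] at ht
      have htm : t ∈ Set.Icc (0:ℝ) r := ⟨le_of_lt ht.1, le_trans ht.2 hsr⟩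
      have : ‖X' t‖ ≤ ‖star (U t)‖ * (‖B t - A t‖ * ‖W t‖) := by
        rw [hX'def]
        simp only [norm_smul, Complex.norm_I, one_mul]
        exact le_trans (norm_mul_le _ _)
          (mul_le_mul_of_nonneg_left (norm_mul_le _ _) (norm_nonneg _))
      refine le_trans this ?_
      rw [norm_star, norm_sub_rev]
      calc ‖U t‖ * (‖A t - B t‖ * ‖W t‖)
          ≤ 1 * (‖A t - B t‖ * 1) := by
            apply mul_le_mul (hUn t htm) ?_ (by positivity) zero_le_one
            exact mul_le_mul_of_nonneg_left (hWn t htm) (norm_nonneg _)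
        _ = ‖A t - B t‖ := by ring
    refine le_trans (intervalIntegral.norm_integral_le_abs_of_norm_le hae hgi)
      (le_of_eq (abs_of_nonneg ?_))
    exact intervalIntegral.integral_nonneg hs0 (fun u _ => norm_nonneg _)
  -- conclude
  have hX0 : X 0 = 1 := by rw [hXdef]; simp [hU0, hW0]
  have hfactor : U s - W s = U s * (X 0 - X s) := by
    rw [hX0, hXdef]
    simp only [mul_sub, mul_one]
    rw [← mul_assoc, hUUs, one_mul]
  rw [hfactor]
  calc ‖U s * (X 0 - X s)‖ ≤ ‖U s‖ * ‖X 0 - X s‖ := norm_mul_le _ _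
    _ ≤ 1 * ‖X s - X 0‖ := by
        rw [norm_sub_rev]
        exact mul_le_mul_of_nonneg_right (hUn s ⟨hs0, hsr⟩) (norm_nonneg _)
    _ = ‖X s - X 0‖ := one_mul _
    _ ≤ _ := hbound
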